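/- Let α : ℤ → ℂ with |α_n| < 1 for all n and ρ_n = (1 − |α_n|²)^{1/2}, and let L, M act on arbitrary sequences u : ℤ → ℂ by the CMV block formulas. Suppose z ∈ ℂ with z ≠ 0 and u : ℤ → ℂ satisfies L(M u) = z·u pointwise. Define v : ℤ → ℂ by v_j = (M u)_j for j even and v_j = z^{−1} (M u)_j for j odd. Then for every n ∈ ℤ: z·(u_{2n+2}, v_{2n+2})ᵀ = z·M_{2n+1}(z)·(v_{2n+1}, u_{2n+1})ᵀ and z·M_{2n+1}(z)·(v_{2n+1}, u_{2n+1})ᵀ = M_{2n+1}(z)·M_{2n}(z)·(u_{2n}, v_{2n})ᵀ, where M_n(z) = ρ_n^{−1}·[[z, −conj(α_n)], [−α_n z, 1]] is a 2×2 complex matrix. -/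

import Mathlib

open scoped ComplexConjugate

noncomputable section

/-- `ρ_n = (1 − |α_n|²)^{1/2}`. -/
def rho (α : ℤ → ℂ) (n : ℤ) : ℝ := Real.sqrt (1 - ‖α n‖ ^ 2)

/-- The 2×2 transfer matrix `M_n(z) = ρ_n^{−1}·[[z, −conj(α_n)], [−α_n z, 1]]`. -/
def Mmat (α : ℤ → ℂ) (z : ℂ) (n : ℤ) : Matrix (Fin 2) (Fin 2) ℂ :=
  ((rho α n : ℂ))⁻¹ • !![z, -conj (α n); -(α n) * z, 1]

/-- the transfer-matrix reformulation of the formal eigenvalue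
equation `L(Mu) = z·u` for the extended CMV matrix. -/
theorem statement11 (α : ℤ → ℂ) (hα : ∀ n, ‖α n‖ < 1)
    (L M : (ℤ → ℂ) → (ℤ → ℂ))
    (hL : ∀ (u : ℤ → ℂ) (m : ℤ),
      L u (2 * m) = conj (α (2 * m)) * u (2 * m) + (rho α (2 * m) : ℂ) * u (2 * m + 1) ∧
      L u (2 * m + 1) = (rho α (2 * m) : ℂ) * u (2 * m) - α (2 * m) * u (2 * m + 1))
    (hM : ∀ (u : ℤ → ℂ) (m : ℤ),
      M u (2 * m + 1) = conj (α (2 * m + 1)) * u (2 * m + 1)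
          + (rho α (2 * m + 1) : ℂ) * u (2 * m + 2) ∧
      M u (2 * m + 2) = (rho α (2 * m + 1) : ℂ) * u (2 * m + 1)
          - α (2 * m + 1) * u (2 * m + 2))
    (z : ℂ) (hz : z ≠ 0)
    (u : ℤ → ℂ) (hu : ∀ n : ℤ, L (M u) n = z * u n)
    (v : ℤ → ℂ)
    (hv : ∀ j : ℤ, v j = if Even j then M u j else z⁻¹ * M u j) :
    ∀ n : ℤ,
      z • ![u (2 * n + 2), v (2 * n + 2)]
          = z • (Mmat α z (2 * n + 1)).mulVec ![v (2 * n + 1), u (2 * n + 1)] ∧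
      z • (Mmat α z (2 * n + 1)).mulVec ![v (2 * n + 1), u (2 * n + 1)]
          = ((Mmat α z (2 * n + 1)) * (Mmat α z (2 * n))).mulVec ![u (2 * n), v (2 * n)] := by
  -- basic facts about rho
  have hrpos : ∀ k : ℤ, 0 < rho α k := by
    intro k
    have : ‖α k‖ ^ 2 < 1 := by
      have := hα k; nlinarith [norm_nonneg (α k)]
    exact Real.sqrt_pos.2 (by linarith)
  have hrne : ∀ k : ℤ, ((rho α k : ℂ)) ≠ 0 := fun k => by
    exact_mod_cast Complex.ofReal_ne_zero.2 (ne_of_gt (hrpos k))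
  have hrsq : ∀ k : ℤ, ((rho α k : ℂ))^2 = 1 - conj (α k) * α k := by
    intro k
    have h1 : (rho α k : ℝ)^2 = 1 - ‖α k‖^2 := by
      have : ‖α k‖ ^ 2 < 1 := by have := hα k; nlinarith [norm_nonneg (α k)]
      simpa [rho] using Real.sq_sqrt (by linarith : (0:ℝ) ≤ 1 - ‖α k‖^2)
    have h2 : conj (α k) * α k = ((‖α k‖ : ℂ))^2 := by
      rw [mul_comm, Complex.mul_conj']
    rw [h2]
    exact_mod_cast h1
  intro n
  have hvo : v (2 * n + 1) = z⁻¹ * M u (2 * n + 1) := by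
    rw [hv]; simp [Int.even_add_one, parity_simps]
  have hv2 : v (2 * n + 2) = M u (2 * n + 2) := by
    rw [hv]; simp [parity_simps]
  have hv0 : v (2 * n) = M u (2 * n) := by
    rw [hv]; simp [parity_simps]
  have E1 := (hM u n).1
  have E2 := (hM u n).2
  have E3 : z * u (2 * n) = conj (α (2 * n)) * M u (2 * n)
      + (rho α (2 * n) : ℂ) * M u (2 * n + 1) := by
    rw [← hu (2 * n), (hL (M u) n).1]
  have E4 : z * u (2 * n + 1) = (rho α (2 * n) : ℂ) * M u (2 * n)
      - α (2 * n) * M u (2 * n + 1) := by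
    rw [← hu (2 * n + 1), (hL (M u) n).2]
  have R0 := hrsq (2 * n)
  have R1 := hrsq (2 * n + 1)
  have key : (Mmat α z (2 * n)).mulVec ![u (2 * n), v (2 * n)]
      = z • ![v (2 * n + 1), u (2 * n + 1)] := by
    funext i
    fin_cases i <;>
    · simp only [Mmat, Matrix.mulVec, dotProduct, Fin.sum_univ_two,
        Matrix.smul_apply, smul_eq_mul, Pi.smul_apply, Matrix.cons_val_zero, Matrix.cons_val_one,
        Matrix.head_cons, Matrix.cons_val', Matrix.empty_val', Matrix.cons_val_fin_one,
        Matrix.of_apply, Fin.zero_eta, Fin.mk_one, hvo, hv0]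
      field_simp [hz, hrne (2 * n)]
      first
      | linear_combination E3
      | linear_combination (-(α (2 * n))) * E3
          - (rho α (2 * n) : ℂ) * E4 - (M u (2 * n)) * R0
  constructor
  · funext i
    fin_cases i <;>
    · simp only [Mmat, Matrix.mulVec, dotProduct, Fin.sum_univ_two,
        Matrix.smul_apply, smul_eq_mul, Pi.smul_apply, Matrix.cons_val_zero, Matrix.cons_val_one,
        Matrix.head_cons, Matrix.cons_val', Matrix.empty_val', Matrix.cons_val_fin_one,
        Matrix.of_apply, Fin.zero_eta, Fin.mk_one, hvo, hv2, E1, E2]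
      field_simp [hz, hrne (2 * n + 1)]
      first
      | ring1
      | linear_combination u (2 * n + 1) * R1
  · rw [← Matrix.mulVec_mulVec, key, Matrix.mulVec_smul]
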